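/- Let u1=(1−√5)/2, u2=(1+√5)/2, A=(√5−3)/(2√5), B=(√5+3)/(2√5), and for every integer k ≥ 1 set M_B(k) = 2·(A·(u1^{k+1}−u1)/(u1²−1) + B·(u2^{k+1}−u2)/(u2²−1)). Then M_B(1)=2, M_B(2)=4, M_B(k)=M_B(k−1)+M_B(k−2)+2 for all k ≥ 3, and consequently M_B(k) = 2·(F_{k+2} − 1) for all k ≥ 1, where (F_j) denotes the Fibonacci sequence with F_1=F_2=1. -/

import Mathlib

/-- `u₁ = (1 - √5)/2`. -/
noncomputable def u1 : ℝ := (1 - Real.sqrt 5) / 2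

/-- `u₂ = (1 + √5)/2`. -/
noncomputable def u2 : ℝ := (1 + Real.sqrt 5) / 2

/-- `A = (√5 - 3)/(2√5)`. -/
noncomputable def A : ℝ := (Real.sqrt 5 - 3) / (2 * Real.sqrt 5)

/-- `B = (√5 + 3)/(2√5)`. -/
noncomputable def B : ℝ := (Real.sqrt 5 + 3) / (2 * Real.sqrt 5)

/-- The bipartite Moore bound `M_B(k)` for `(1,1,k)`-mixed graphs. -/
noncomputable def MB (k : ℕ) : ℝ :=
  2 * (A * (u1 ^ (k + 1) - u1) / (u1 ^ 2 - 1) + B * (u2 ^ (k + 1) - u2) / (u2 ^ 2 - 1))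

lemma s_sq : Real.sqrt 5 ^ 2 = 5 := Real.sq_sqrt (by norm_num)

lemma s_gt : (2:ℝ) < Real.sqrt 5 := by
  nlinarith [s_sq, Real.sqrt_nonneg 5]

lemma MB_key (k : ℕ) : MB k = 2 * ((Nat.fib (k + 2) : ℝ) - 1) := by
  have hs := s_sq
  have hs2 := s_gt
  have hu1 : u1 ≠ 0 := by unfold u1; intro h; nlinarith [h]
  have hu2 : u2 ≠ 0 := by unfold u2; intro h; nlinarith [h]
  have h1 : u1 ^ 2 - 1 = u1 := by unfold u1; nlinarith
  have h2 : u2 ^ 2 - 1 = u2 := by unfold u2; nlinarith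
  have e1 : A * (u1 ^ (k + 1) - u1) / (u1 ^ 2 - 1) = A * (u1 ^ k - 1) := by
    rw [h1, pow_succ]; field_simp
  have e2 : B * (u2 ^ (k + 1) - u2) / (u2 ^ 2 - 1) = B * (u2 ^ k - 1) := by
    rw [h2, pow_succ]; field_simp
  have hfib : (Nat.fib (k + 2) : ℝ) = (u2 ^ (k + 2) - u1 ^ (k + 2)) / Real.sqrt 5 := by
    rw [Real.coe_fib_eq]; rfl
  have hA : A = -u1 ^ 2 / Real.sqrt 5 := by
    unfold A u1; rw [div_eq_div_iff (by positivity) (by positivity)]; nlinarith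
  have hB : B = u2 ^ 2 / Real.sqrt 5 := by
    unfold B u2; rw [div_eq_div_iff (by positivity) (by positivity)]; nlinarith
  have hAB : A + B = 1 := by
    unfold A B; rw [← add_div, div_eq_one_iff_eq (by positivity)]; ring
  have hd : u1 ^ 2 - u2 ^ 2 = -Real.sqrt 5 := by unfold u1 u2; ring
  rw [MB, e1, e2, hfib, hA, hB]
  have h5 : Real.sqrt 5 ≠ 0 := by positivity
  field_simp
  linear_combination hd

/-- `M_B(1) = 2`, `M_B(2) = 4`, `M_B(k) = M_B(k-1) + M_B(k-2) + 2` for `k ≥ 3`, and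
consequently `M_B(k) = 2 (F_{k+2} - 1)` for all `k ≥ 1`, where `F` is the Fibonacci
sequence with `F_1 = F_2 = 1`. -/
theorem MB_values_recurrence_and_fib :
    MB 1 = 2 ∧ MB 2 = 4 ∧
    (∀ k : ℕ, 3 ≤ k → MB k = MB (k - 1) + MB (k - 2) + 2) ∧
    (∀ k : ℕ, 1 ≤ k → MB k = 2 * ((Nat.fib (k + 2) : ℝ) - 1)) := by
  refine ⟨by rw [MB_key]; norm_num, by rw [MB_key]; norm_num, ?_, fun k _ => MB_key k⟩
  intro k hk
  obtain ⟨m, rfl⟩ : ∃ m, k = m + 3 := ⟨k - 3, by omega⟩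
  simp only [MB_key, show m + 3 - 1 = m + 2 from rfl, show m + 3 - 2 = m + 1 from rfl]
  have : Nat.fib (m + 3 + 2) = Nat.fib (m + 2 + 2) + Nat.fib (m + 1 + 2) := by
    rw [show m + 3 + 2 = (m + 3) + 2 from rfl, Nat.fib_add_two]; ring_nf
  rw [this]; push_cast; ring
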